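/- arXiv:2209.02644 — 3 statements merged into one kernel-verified Lean document; each statement's English description precedes it below -/
import Mathlib

section
/- Let p be an odd prime, n = p−1, and let D_glp be the n×n matrix with (i,h) entry equal to (i·h mod p). For any ordered pair (a,b) with 1 ≤ a ≠ b ≤ n, there is exactly one row of D_glp in which b appears immediately to the right of a (i.e., exactly one pair (i,h) with 1 ≤ h ≤ n−1 such that row i has entry a at position h and entry b at position h+1). -/
/-- Pair balance of the good lattice point design: for an odd prime p, n = p−1,
and any ordered pair (a,b) of distinct symbols in {1,…,n}, there is exactly one
position (i,h) with 1 ≤ i ≤ n, 1 ≤ h ≤ n−1 such that row i of D_glp has entry a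
at position h and entry b at position h+1. -/
theorem glp_pair_balanced (p : ℕ) (hp : p.Prime) (hodd : Odd p)
    (a b : ℕ) (ha : a ∈ Finset.Icc 1 (p - 1)) (hb : b ∈ Finset.Icc 1 (p - 1))
    (hab : a ≠ b) :
    ((Finset.Icc 1 (p - 1) ×ˢ Finset.Icc 1 (p - 2)).filter
      (fun q => q.1 * q.2 % p = a ∧ q.1 * (q.2 + 1) % p = b)).card = 1 := by
  haveI : Fact p.Prime := ⟨hp⟩
  have hp2 : p ≠ 2 := by rintro rfl; exact (by decide : ¬ Odd 2) hodd
  have hp3 : 3 ≤ p := by have := hp.two_le; omega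
  simp only [Finset.mem_Icc] at ha hb
  have hap : a < p := by omega
  have hbp : b < p := by omega
  set a' : ZMod p := (a : ZMod p) with ha'
  set b' : ZMod p := (b : ZMod p) with hb'
  have hva : a'.val = a := ZMod.val_cast_of_lt hap
  have hvb : b'.val = b := ZMod.val_cast_of_lt hbp
  have ha0 : a' ≠ 0 := by
    intro h; rw [h, ZMod.val_zero] at hva; omega
  have hb0 : b' ≠ 0 := by
    intro h; rw [h, ZMod.val_zero] at hvb; omega
  have hab' : a' ≠ b' := by
    intro h; apply hab; rw [← hva, ← hvb, h]
  set i : ZMod p := b' - a' with hi'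
  have hi0 : i ≠ 0 := sub_ne_zero.mpr (Ne.symm hab')
  set hh : ZMod p := a' * i⁻¹ with hh'
  have hh0 : hh ≠ 0 := mul_ne_zero ha0 (inv_ne_zero hi0)
  have hih : i * hh = a' := by
    rw [hh', mul_comm a', ← mul_assoc, mul_inv_cancel₀ hi0, one_mul]
  have hih1 : i * (hh + 1) = b' := by
    rw [mul_add, hih, mul_one, hi']; ring
  have key : ∀ m c : ℕ, c < p → (m % p = c ↔ (m : ZMod p) = (c : ZMod p)) := by
    intro m c hc
    constructor
    · intro h
      have hv : (m : ZMod p).val = (c : ZMod p).val := by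
        rw [ZMod.val_natCast, ZMod.val_cast_of_lt hc, h]
      exact ZMod.val_injective p hv
    · intro h
      have hv := congrArg ZMod.val h
      rwa [ZMod.val_natCast, ZMod.val_cast_of_lt hc] at hv
  have hcast : ∀ z : ZMod p, ((z.val : ℕ) : ZMod p) = z := fun z =>
    ZMod.natCast_rightInverse z
  have hvi : 1 ≤ i.val := Nat.one_le_iff_ne_zero.mpr (by
    simpa [ZMod.val_eq_zero] using hi0)
  have hvi' : i.val < p := ZMod.val_lt i
  have hvh : 1 ≤ hh.val := Nat.one_le_iff_ne_zero.mpr (by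
    simpa [ZMod.val_eq_zero] using hh0)
  have hvh' : hh.val ≤ p - 2 := by
    have h1 : hh.val < p := ZMod.val_lt hh
    have h2 : hh.val ≠ p - 1 := by
      intro h
      have h3 : hh = ((p - 1 : ℕ) : ZMod p) := by rw [← h, hcast]
      have h4 : ((p - 1 : ℕ) : ZMod p) = -1 := by
        rw [Nat.cast_sub hp.one_le, ZMod.natCast_self]; ring
      rw [h3, h4] at hih1
      simp at hih1
      exact hb0 hih1.symm
    omega
  apply Finset.card_eq_one.mpr
  refine ⟨(i.val, hh.val), Finset.eq_singleton_iff_unique_mem.mpr ⟨?_, ?_⟩⟩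
  · simp only [Finset.mem_filter, Finset.mem_product, Finset.mem_Icc]
    refine ⟨⟨⟨hvi, by omega⟩, hvh, hvh'⟩, ?_, ?_⟩
    · rw [key _ _ hap]; push_cast [hcast]; exact hih
    · rw [key _ _ hbp]; push_cast [hcast]; exact hih1
  · rintro ⟨x, y⟩ hx
    simp only [Finset.mem_filter, Finset.mem_product, Finset.mem_Icc] at hx
    obtain ⟨⟨⟨hx1, hx2⟩, hy1, hy2⟩, he1, he2⟩ := hx
    have hxp : x < p := by omega
    have hyp : y < p := by omega
    rw [key _ _ hap] at he1
    rw [key _ _ hbp] at he2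
    push_cast at he1 he2
    rw [← ha'] at he1
    rw [← hb'] at he2
    have hX : (x : ZMod p) = i := by
      rw [hi', ← he1, ← he2]; ring
    have hY : (y : ZMod p) = hh := by
      apply mul_left_cancel₀ hi0
      rw [hih, ← he1, hX]
    have hx' : x = i.val := by rw [← hX, ZMod.val_cast_of_lt hxp]
    have hy' : y = hh.val := by rw [← hY, ZMod.val_cast_of_lt hyp]
    simp [Prod.ext_iff, hx', hy']
end

section
/- Let p be an odd prime, n = p−1, and let D_glp be the n×n matrix with (i,h) entry (i·h mod p). For any two distinct rows i ≠ j, the squared Euclidean distance between the rows satisfies ∑_{h=1}^{n} ((i·h mod p) − (j·h mod p))² ≥ ∑_{c=1}^{n} min(c, p−c)². -/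
/-- For an odd prime p, n = p−1, and distinct rows i ≠ j of the good lattice
point design, the squared Euclidean distance between the rows is at least
∑_{c=1}^{n} min(c, p−c)². -/
theorem glp_rows_sq_dist_lower_bound (p : ℕ) (hp : p.Prime) (hodd : Odd p)
    (i j : ℕ) (hi : i ∈ Finset.Icc 1 (p - 1)) (hj : j ∈ Finset.Icc 1 (p - 1))
    (hij : i ≠ j) :
    ∑ c ∈ Finset.Icc 1 (p - 1), ((min c (p - c) : ℤ)) ^ 2 ≤
      ∑ h ∈ Finset.Icc 1 (p - 1), ((i * h % p : ℤ) - (j * h % p : ℤ)) ^ 2 := by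
  obtain ⟨hi1, hi2⟩ := Finset.mem_Icc.mp hi
  obtain ⟨hj1, hj2⟩ := Finset.mem_Icc.mp hj
  have hp2 : 2 ≤ p := hp.two_le
  have hpz : (0:ℤ) < (p:ℤ) := by exact_mod_cast Nat.lt_of_lt_of_le Nat.zero_lt_two hp2
  have hpint : Prime (p:ℤ) := Nat.prime_iff_prime_int.mp hp
  set d : ℤ := (i:ℤ) - j with hd
  have hdnd : ¬ (p:ℤ) ∣ d := by
    intro hdvd
    have hd0 : d ≠ 0 := by
      simp only [hd, sub_ne_zero]
      exact_mod_cast hij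
    have h1 := Int.le_of_dvd (abs_pos.mpr hd0) ((dvd_abs _ _).mpr hdvd)
    have h2 : |d| < (p:ℤ) := by
      rw [abs_lt, hd]
      constructor <;> push_cast <;> omega
    omega
  have hnh : ∀ h ∈ Finset.Icc 1 (p-1), ¬ (p:ℤ) ∣ (h:ℤ) := by
    intro h hh hdvd
    obtain ⟨h1, h2⟩ := Finset.mem_Icc.mp hh
    have h3 := Int.le_of_dvd (by exact_mod_cast h1) hdvd
    have h4 : (h:ℤ) ≤ (p:ℤ) - 1 := by push_cast; omega
    omega
  set g : ℕ → ℕ := fun h => (d * h % p).toNat with hg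
  have hcprop : ∀ h ∈ Finset.Icc 1 (p-1),
      0 ≤ d * h % p ∧ d * h % p < p ∧ d * h % p ≠ 0 := by
    intro h hh
    refine ⟨Int.emod_nonneg _ (by omega), Int.emod_lt_of_pos _ hpz, ?_⟩
    intro hc0
    have : (p:ℤ) ∣ d * h := Int.dvd_of_emod_eq_zero hc0
    rcases hpint.dvd_mul.mp this with h1 | h1
    · exact hdnd h1
    · exact hnh h hh h1
  have hg_mem : ∀ h ∈ Finset.Icc 1 (p-1), g h ∈ Finset.Icc 1 (p-1) := by
    intro h hh
    obtain ⟨c0, c1, c2⟩ := hcprop h hh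
    simp only [hg, Finset.mem_Icc]
    omega
  have hg_inj : Set.InjOn g (Finset.Icc 1 (p-1)) := by
    intro a ha b hb hab
    simp only [Finset.coe_Icc, Set.mem_Icc] at ha hb
    obtain ⟨c0, c1, c2⟩ := hcprop a (Finset.mem_Icc.mpr ha)
    obtain ⟨c0', c1', c2'⟩ := hcprop b (Finset.mem_Icc.mpr hb)
    have heq : d * a % p = d * b % p := by
      simp only [hg] at hab
      omega
    have hdvd : (p:ℤ) ∣ d * ((a:ℤ) - b) := by
      have h5 : (p:ℤ) ∣ d * b - d * a := Int.ModEq.dvd heq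
      have h2 : d * ((a:ℤ) - b) = -(d * b - d * a) := by ring
      rw [h2]
      exact dvd_neg.mpr h5
    rcases hpint.dvd_mul.mp hdvd with h1 | h1
    · exact absurd h1 hdnd
    · obtain ⟨k, hk⟩ := h1
      have hb1 : -((p:ℤ) - 1) ≤ (a:ℤ) - b := by push_cast; omega
      have hb2 : (a:ℤ) - b ≤ (p:ℤ) - 1 := by push_cast; omega
      have hk1 : k < 1 := by nlinarith
      have hk2 : -1 < k := by nlinarith
      have hk0 : k = 0 := by omega
      have : (a:ℤ) - b = 0 := by rw [hk, hk0, mul_zero]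
      omega
  have himg : Finset.image g (Finset.Icc 1 (p-1)) = Finset.Icc 1 (p-1) := by
    apply Finset.eq_of_subset_of_card_le
    · intro x hx
      obtain ⟨h, hh, rfl⟩ := Finset.mem_image.mp hx
      exact hg_mem h hh
    · rw [Finset.card_image_of_injOn hg_inj]
  have hLHS : ∑ c ∈ Finset.Icc 1 (p - 1), ((min c (p - c) : ℤ)) ^ 2
      = ∑ h ∈ Finset.Icc 1 (p - 1), (min ((g h : ℕ) : ℤ) ((p:ℤ) - (g h : ℕ))) ^ 2 := by
    conv_lhs => rw [← himg]
    exact Finset.sum_image (fun a ha b hb => hg_inj ha hb)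
  rw [hLHS]
  apply Finset.sum_le_sum
  intro h hh
  obtain ⟨c0, c1, c2⟩ := hcprop h hh
  set a : ℤ := (i:ℤ) * h % p with ha
  set b : ℤ := (j:ℤ) * h % p with hb
  set c : ℤ := d * h % p with hc
  have ha0 : 0 ≤ a := Int.emod_nonneg _ (by omega)
  have ha1 : a < p := Int.emod_lt_of_pos _ hpz
  have hb0 : 0 ≤ b := Int.emod_nonneg _ (by omega)
  have hb1 : b < p := Int.emod_lt_of_pos _ hpz
  -- a - b ≡ c mod p
  have e1 : a % (p:ℤ) = ((i:ℤ) * h) % p := Int.emod_emod_of_dvd _ dvd_rfl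
  have e2 : b % (p:ℤ) = ((j:ℤ) * h) % p := Int.emod_emod_of_dvd _ dvd_rfl
  have e3 : c % (p:ℤ) = (d * h) % p := Int.emod_emod_of_dvd _ dvd_rfl
  have hmodeq : (a - b) % (p:ℤ) = c % p := by
    calc (a - b) % (p:ℤ) = (((i:ℤ) * h) % p - ((j:ℤ) * h) % p) % p := by rw [ha, hb]
    _ = ((i:ℤ) * h - (j:ℤ) * h) % p := (Int.sub_emod _ _ _).symm
    _ = (d * h) % p := by rw [hd]; ring_nf
    _ = c % p := e3.symm
  have hdvd : (p:ℤ) ∣ (a - b - c) := Int.ModEq.dvd (hmodeq.symm : c ≡ a - b [ZMOD (p:ℤ)])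
  obtain ⟨k, hk⟩ := hdvd
  have hk1 : k < 1 := by nlinarith
  have hk2 : -2 < k := by nlinarith
  -- min facts
  have hgh : (g h : ℤ) = c := by simp only [hg]; exact Int.toNat_of_nonneg c0
  set m : ℤ := min ((g h : ℕ) : ℤ) ((p:ℤ) - (g h : ℕ)) with hm
  have hm1 : m ≤ c := by rw [hm, hgh]; exact min_le_left _ _
  have hm2 : m ≤ (p:ℤ) - c := by rw [hm, hgh]; exact min_le_right _ _
  have hm0 : 0 ≤ m := by rw [hm, hgh]; exact le_min c0 (by omega)
  rcases (by omega : k = 0 ∨ k = -1) with rfl | rfl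
  · have hab : a - b = c := by omega
    rw [hab]
    exact pow_le_pow_left₀ hm0 hm1 2
  · have hab : a - b = c - p := by omega
    rw [hab]
    have hsq : (c - (p:ℤ)) ^ 2 = ((p:ℤ) - c) ^ 2 := by ring
    rw [hsq]
    exact pow_le_pow_left₀ hm0 hm2 2
end

section
/- Let p be an odd prime and n = p−1. For each l ∈ {2,…,n−1} with l ≠ n, let l' ∈ {1,…,n} be the unique element with l·l' ≡ 1 (mod p). Then l' ≠ l unless l² ≡ 1 (mod p), and the L2-distance between rows 1 and l of the good lattice point design equals the L2-distance between rows 1 and l': ∑_{h=1}^{n} (h mod p − l·h mod p)² = ∑_{h=1}^{n} (h mod p − l'·h mod p)². -/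
/-- For an odd prime p, n = p−1, l ∈ {2,…,n−1}, and l' the (unique) element of
{1,…,n} with l·l' ≡ 1 (mod p): l' ≠ l unless l² ≡ 1 (mod p), and the squared
L2-distance between rows 1 and l of the good lattice point design equals that
between rows 1 and l'. -/
theorem glp_inverse_row_same_distance (p : ℕ) (hp : p.Prime) (hodd : Odd p)
    (l l' : ℕ) (hl : 2 ≤ l) (hl2 : l ≤ p - 2)
    (hl' : l' ∈ Finset.Icc 1 (p - 1)) (hinv : l * l' % p = 1) :
    (l' = l → l * l % p = 1) ∧
    ∑ h ∈ Finset.Icc 1 (p - 1), ((h % p : ℤ) - (l * h % p : ℤ)) ^ 2 =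
      ∑ h ∈ Finset.Icc 1 (p - 1), ((h % p : ℤ) - (l' * h % p : ℤ)) ^ 2 := by
  have hppos : 0 < p := hp.pos
  have hmem : ∀ a : ℕ, a ∈ Finset.Icc 1 (p - 1) ↔ a ≠ 0 ∧ a < p := by
    intro a
    rw [Finset.mem_Icc]
    constructor
    · rintro ⟨h1, h2⟩
      exact ⟨by omega, by omega⟩
    · rintro ⟨h1, h2⟩
      exact ⟨by omega, by omega⟩
  have hmul : ∀ a b : ℕ, a ∈ Finset.Icc 1 (p - 1) → b ∈ Finset.Icc 1 (p - 1) →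
      a * b % p ∈ Finset.Icc 1 (p - 1) := by
    intro a b ha hb
    rw [hmem] at ha hb ⊢
    refine ⟨?_, Nat.mod_lt _ hppos⟩
    intro h
    have : p ∣ a * b := Nat.dvd_of_mod_eq_zero h
    rcases (hp.dvd_mul.mp this) with h' | h'
    · exact absurd (Nat.le_of_dvd (by omega) h') (by omega)
    · exact absurd (Nat.le_of_dvd (by omega) h') (by omega)
  have hlmem : l ∈ Finset.Icc 1 (p - 1) := by
    rw [hmem]; have := hp.two_le; omega
  -- key cancellation
  have hcancel : ∀ a b h : ℕ, a * b % p = 1 → h < p → a * (b * h % p) % p = h := by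
    intro a b h hab hhp
    rw [Nat.mul_mod_mod, ← Nat.mul_assoc, Nat.mul_mod, hab, one_mul,
      Nat.mod_mod_of_dvd _ dvd_rfl, Nat.mod_eq_of_lt hhp]
  have hcancel2 : ∀ a b h : ℕ, a * b % p = 1 → h < p → b * (a * h % p) % p = h := by
    intro a b h hab hhp
    exact hcancel b a h (by rwa [Nat.mul_comm]) hhp
  constructor
  · intro he
    rw [← he] at hinv ⊢
    rwa [Nat.mul_comm]
  · refine Finset.sum_nbij' (fun h => l * h % p) (fun h => l' * h % p) ?_ ?_ ?_ ?_ ?_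
    · intro a ha; exact hmul l a hlmem ha
    · intro a ha; exact hmul l' a hl' ha
    · intro a ha
      rw [hmem] at ha
      exact hcancel2 l l' a hinv ha.2
    · intro a ha
      rw [hmem] at ha
      exact hcancel l l' a hinv ha.2
    · intro a ha
      rw [hmem] at ha
      have h1 : a % p = a := Nat.mod_eq_of_lt ha.2
      have h2 : l' * (l * a % p) % p = a := hcancel2 l l' a hinv ha.2
      have h3 : (l * a % p) % p = l * a % p := Nat.mod_mod_of_dvd _ dvd_rfl
      simp only [← Nat.cast_mul, ← Int.natCast_mod, h1, h2, h3]
      ring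
end
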